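/- Let (N, G, φ, A) be a crossed module of groupoids and N ⋊ G its crossed product groupoid. There is a functor ρ : Bℤ × (N ⋊ G) → N ⋊ G which is the identity on objects and sends a morphism (k, g), where k ∈ ℤ and g : (x, n) ⟶ (y, m) is a morphism of N ⋊ G, to the morphism φ_x(nᵏ) ≫ g : (x, n) ⟶ (y, m). In particular φ_x(nᵏ) ≫ g is again a morphism (x, n) ⟶ (y, m) of N ⋊ G (i.e. A(φ_x(nᵏ) ≫ g)(n) = m), and ρ(k + l, g ≫ h) = ρ(k, g) ≫ ρ(l, h) for all composable morphisms g, h of N ⋊ G and all k, l ∈ ℤ. -/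

import Mathlib

open CategoryTheory

universe v u w

/-- A crossed module of groupoids `(N, G, φ, A)`: a groupoid `G`, a family of groups
`N x` indexed by the objects of `G`, group homomorphisms `φ x : N x →* (x ⟶ x)` into
the vertex groups of `G`, and for every morphism `g : x ⟶ y` a group isomorphism
`A g : N x ≃* N y`, subject to `A (𝟙 x) = id`, `A (g ≫ h) = A h ∘ A g`, the
equivariance condition `φ y (A g n) = g⁻¹ ≫ φ x n ≫ g` and the Peiffer condition
`A (φ x m) n = m⁻¹ * n * m`. -/
structure CrossedModuleGpd (G : Type u) [Groupoid.{v, u} G]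
    (N : G → Type w) [∀ x, Group (N x)] where
  φ : ∀ x : G, N x →* (x ⟶ x)
  A : ∀ {x y : G}, (x ⟶ y) → (N x ≃* N y)
  A_id : ∀ x : G, A (𝟙 x) = MulEquiv.refl (N x)
  A_comp : ∀ {x y z : G} (g : x ⟶ y) (h : y ⟶ z), A (g ≫ h) = (A g).trans (A h)
  equivariance : ∀ {x y : G} (g : x ⟶ y) (n : N x),
    φ y (A g n) = Groupoid.inv g ≫ φ x n ≫ g
  peiffer : ∀ {x : G} (m n : N x), A (φ x m) n = m⁻¹ * n * m

variable {G : Type u} [Groupoid.{v, u} G] {N : G → Type w} [∀ x, Group (N x)]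

/-- Objects of the crossed product groupoid `N ⋊ G`: pairs `(x, n)` with `n ∈ N x`. -/
def CrossedProd (_C : CrossedModuleGpd G N) : Type (max u w) := Σ x : G, N x

/-- The crossed product groupoid `N ⋊ G`: morphisms `(x, n) ⟶ (y, m)` are morphisms
`g : x ⟶ y` of `G` with `A g n = m`; composition and identities are those of `G`. -/
instance CrossedProd.category (C : CrossedModuleGpd G N) : Category (CrossedProd C) where
  Hom a b := { g : a.1 ⟶ b.1 // C.A g a.2 = b.2 }
  id a := ⟨𝟙 a.1, by rw [C.A_id]; rfl⟩
  comp {a b c} f g := ⟨f.1 ≫ g.1, by rw [C.A_comp]; simp [f.2, g.2]⟩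
  id_comp f := by apply Subtype.ext; simp
  comp_id f := by apply Subtype.ext; simp
  assoc f g h := by apply Subtype.ext; simp

/-- The one-object groupoid `Bℤ` with endomorphism group the integers. -/
abbrev BZ : Type := SingleObj (Multiplicative ℤ)

section Aux
variable {G : Type u} [Groupoid.{v, u} G] {N : G → Type w} [∀ x, Group (N x)]

lemma key_lemma (C : CrossedModuleGpd G N) (a b : CrossedProd C) (k : ℤ) (g : a ⟶ b) :
    C.A (C.φ a.1 (a.2 ^ k) ≫ g.1) a.2 = b.2 := by
  have h1 : C.A (C.φ a.1 (a.2 ^ k)) a.2 = a.2 := by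
    rw [C.peiffer]; group
  rw [C.A_comp, MulEquiv.trans_apply, h1, g.2]

lemma comp_lemma (C : CrossedModuleGpd G N) {a b c : CrossedProd C} (k l : ℤ)
    (g : a ⟶ b) (h : b ⟶ c) :
    C.φ a.1 (a.2 ^ (k + l)) ≫ (g.1 ≫ h.1) =
      (C.φ a.1 (a.2 ^ k) ≫ g.1) ≫ (C.φ b.1 (b.2 ^ l) ≫ h.1) := by
  have key : C.φ b.1 (b.2 ^ l) = Groupoid.inv g.1 ≫ C.φ a.1 (a.2 ^ l) ≫ g.1 := by
    calc C.φ b.1 (b.2 ^ l) = C.φ b.1 (C.A g.1 (a.2 ^ l)) := by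
          conv_lhs => rw [← g.2, ← map_zpow]
    _ = Groupoid.inv g.1 ≫ C.φ a.1 (a.2 ^ l) ≫ g.1 := C.equivariance _ _
  rw [key, zpow_add, map_mul, Groupoid.vertexGroup_mul]
  simp

/-- The functor ρ. -/
def rho (C : CrossedModuleGpd G N) : BZ × CrossedProd C ⥤ CrossedProd C where
  obj X := X.2
  map {X Y} f := ⟨C.φ X.2.1 (X.2.2 ^ (Multiplicative.toAdd f.1)) ≫ f.2.1, key_lemma C _ _ _ _⟩
  map_id X := by
    apply Subtype.ext
    show C.φ X.2.1 (X.2.2 ^ (Multiplicative.toAdd (1 : Multiplicative ℤ))) ≫ 𝟙 X.2.1 = 𝟙 X.2.1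
    rw [toAdd_one, zpow_zero, map_one]
    exact Category.id_comp _
  map_comp {X Y Z} f g := by
    apply Subtype.ext
    have := comp_lemma C (Multiplicative.toAdd f.1) (Multiplicative.toAdd g.1) f.2 g.2
    rw [add_comm (Multiplicative.toAdd f.1)] at this
    simpa [CategoryStruct.comp] using this

end Aux

/-- For a crossed module of groupoids `(N, G, φ, A)` there is a functor
`ρ : Bℤ × (N ⋊ G) ⥤ N ⋊ G` which is the identity on objects and sends a morphism
`(k, g)`, with `g : (x, n) ⟶ (y, m)`, to `φ x (nᵏ) ≫ g : (x, n) ⟶ (y, m)`; in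
particular `φ x (nᵏ) ≫ g` is again a morphism `(x, n) ⟶ (y, m)` (i.e.
`A (φ x (nᵏ) ≫ g) n = m`), and `ρ(k + l, g ≫ h) = ρ(k, g) ≫ ρ(l, h)`. -/
theorem stmt5 (C : CrossedModuleGpd G N) :
    (∀ (a b : CrossedProd C) (k : ℤ) (g : a ⟶ b),
      C.A (C.φ a.1 (a.2 ^ k) ≫ g.1) a.2 = b.2) ∧
    ∃ ρ : BZ × CrossedProd C ⥤ CrossedProd C,
    ∃ hobj : ∀ X : BZ × CrossedProd C, ρ.obj X = X.2,
      (∀ (a b : CrossedProd C) (k : Multiplicative ℤ) (g : a ⟶ b),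
        (ρ.map ((k, g) :
            (SingleObj.star (Multiplicative ℤ), a) ⟶
            (SingleObj.star (Multiplicative ℤ), b))).1 =
          eqToHom (congrArg Sigma.fst (hobj (SingleObj.star (Multiplicative ℤ), a))) ≫
            (C.φ a.1 (a.2 ^ Multiplicative.toAdd k) ≫ g.1) ≫
            eqToHom (congrArg Sigma.fst (hobj (SingleObj.star (Multiplicative ℤ), b))).symm) ∧
      (∀ (a b c : CrossedProd C) (k l : ℤ) (g : a ⟶ b) (h : b ⟶ c),
        ρ.map ((Multiplicative.ofAdd (k + l), g ≫ h) :
            (SingleObj.star (Multiplicative ℤ), a) ⟶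
            (SingleObj.star (Multiplicative ℤ), c)) =
          ρ.map ((Multiplicative.ofAdd k, g) :
            (SingleObj.star (Multiplicative ℤ), a) ⟶
            (SingleObj.star (Multiplicative ℤ), b)) ≫
          ρ.map ((Multiplicative.ofAdd l, h) :
            (SingleObj.star (Multiplicative ℤ), b) ⟶
            (SingleObj.star (Multiplicative ℤ), c))) := by
  refine ⟨key_lemma C, rho C, fun X => rfl, ?_, ?_⟩
  · intro a b k g
    simp [rho]
    exact (Category.id_comp _).symm
  · intro a b c k l g h
    apply Subtype.ext
    have := comp_lemma C k l g h
    simpa [rho, CategoryStruct.comp] using this
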